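/- Let F be a field of characteristic 0, let V be an F-vector space with dim V = k, and let n be a positive integer with k² < n. Then the image under φ of the group algebra of the alternating group equals the image of the full group algebra: φ(F[Aₙ]) = φ(F[Sₙ]) as subalgebras of End_F(V^{⊗n}). -/

import Mathlib

open scoped TensorProduct

namespace Stmt0Aux

open Equiv Finset

set_option linter.unusedSectionVars false

variable {n k : ℕ}

/-- Extension of a permutation of `Fin (k+1)` along an embedding into `Fin n`. -/
noncomputable def pext (e : Fin (k+1) ↪ Fin n) (τ : Equiv.Perm (Fin (k+1))) : Equiv.Perm (Fin n) :=
  letI := Classical.decPred (· ∈ Set.range ⇑e)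
  τ.extendDomain (Equiv.ofInjective ⇑e e.injective)

lemma pext_mul (e : Fin (k+1) ↪ Fin n) (τ τ' : Equiv.Perm (Fin (k+1))) :
    pext e (τ * τ') = pext e τ * pext e τ' := by
  letI := Classical.decPred (· ∈ Set.range ⇑e)
  exact (Equiv.Perm.extendDomain_mul _ τ τ').symm

lemma pext_inv (e : Fin (k+1) ↪ Fin n) (τ : Equiv.Perm (Fin (k+1))) :
    (pext e τ)⁻¹ = pext e τ⁻¹ := by
  letI := Classical.decPred (· ∈ Set.range ⇑e)
  rfl

lemma sign_pext (e : Fin (k+1) ↪ Fin n) (τ : Equiv.Perm (Fin (k+1))) :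
    Equiv.Perm.sign (pext e τ) = Equiv.Perm.sign τ := by
  letI := Classical.decPred (· ∈ Set.range ⇑e)
  exact Equiv.Perm.sign_extendDomain τ _

lemma pext_apply_mem (e : Fin (k+1) ↪ Fin n) (τ : Equiv.Perm (Fin (k+1))) (p : Fin (k+1)) :
    pext e τ (e p) = e (τ p) := by
  letI := Classical.decPred (· ∈ Set.range ⇑e)
  have h := Equiv.Perm.extendDomain_apply_image τ (Equiv.ofInjective ⇑e e.injective) p
  exact h

lemma pext_apply_not (e : Fin (k+1) ↪ Fin n) (τ : Equiv.Perm (Fin (k+1))) {i : Fin n}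
    (h : i ∉ Set.range ⇑e) : pext e τ i = i := by
  letI := Classical.decPred (· ∈ Set.range ⇑e)
  exact Equiv.Perm.extendDomain_apply_not_subtype τ _ h

section Main

variable {F : Type*} [Field F] [CharZero F]
  {V : Type*} [AddCommGroup V] [Module F V]
  (b : Module.Basis (Fin k) F V)
  (φ : Representation F (Equiv.Perm (Fin n)) (⨂[F] _ : Fin n, V))

/-- Basic tensors. -/
noncomputable def T (j : Fin n → Fin k) : ⨂[F] _ : Fin n, V :=
  PiTensorProduct.tprod F (fun i => b (j i))

lemma spanT : Submodule.span F (Set.range (T b (n := n))) = ⊤ := by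
  rw [eq_top_iff, ← PiTensorProduct.span_tprod_eq_top, Submodule.span_le]
  rintro x ⟨v, rfl⟩
  have hv : (PiTensorProduct.tprod F (s := fun _ : Fin n => V)) v
      = ∑ j : Fin n → Fin k, (∏ i, b.repr (v i) (j i)) • T b j := by
    calc (PiTensorProduct.tprod F (s := fun _ : Fin n => V)) v
        = (PiTensorProduct.tprod F (s := fun _ : Fin n => V))
            (fun i => ∑ c : Fin k, b.repr (v i) c • b c) := by
          congr 1; funext i; rw [Module.Basis.sum_repr b (v i)]
      _ = ∑ j : Fin n → Fin k, (PiTensorProduct.tprod F (s := fun _ : Fin n => V))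
            (fun i => b.repr (v i) (j i) • b (j i)) :=
          MultilinearMap.map_sum _ (fun i c => b.repr (v i) c • b c)
      _ = ∑ j : Fin n → Fin k, (∏ i, b.repr (v i) (j i)) • T b j := by
          refine Finset.sum_congr rfl (fun j _ => ?_)
          exact MultilinearMap.map_smul_univ _ _ _
  rw [hv]
  exact Submodule.sum_mem _ fun j _ =>
    Submodule.smul_mem _ _ (Submodule.subset_span ⟨j, rfl⟩)

variable (hφ : ∀ (σ : Equiv.Perm (Fin n)) (v : Fin n → V),
      φ σ (PiTensorProduct.tprod F v) = PiTensorProduct.tprod F (fun i => v (σ⁻¹ i)))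

include hφ in
lemma phiT (σ : Equiv.Perm (Fin n)) (j : Fin n → Fin k) :
    φ σ (T b j) = T b (fun i => j (σ⁻¹ i)) := by
  simpa [T] using hφ σ (fun i => b (j i))

include b hφ in
/-- The even and odd halves of the symmetrizer agree as operators. -/
lemma EO (e : Fin (k+1) ↪ Fin n) :
    ∑ τ ∈ univ.filter (fun τ : Equiv.Perm (Fin (k+1)) => Equiv.Perm.sign τ = 1), φ (pext e τ)
      = ∑ τ ∈ univ.filter (fun τ : Equiv.Perm (Fin (k+1)) => ¬ Equiv.Perm.sign τ = 1),
          φ (pext e τ) := by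
  apply LinearMap.ext_on_range (spanT b)
  intro j
  simp only [LinearMap.coe_sum, Finset.sum_apply]
  -- pigeonhole on the k+1 values j (e p) in Fin k
  obtain ⟨p, q, hpq, hjpq⟩ :=
    Fintype.exists_ne_map_eq_of_card_lt (fun p : Fin (k+1) => j (e p)) (by simp)
  have hswap : ∀ y : Fin n, j (pext e (Equiv.swap p q) y) = j y := by
    intro y
    by_cases hy : y ∈ Set.range ⇑e
    · obtain ⟨r, rfl⟩ := hy
      rw [pext_apply_mem]
      rcases Equiv.swap_apply_def p q r with _
      by_cases hrp : r = p
      · subst hrp; rw [Equiv.swap_apply_left]; exact hjpq.symm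
      by_cases hrq : r = q
      · subst hrq; rw [Equiv.swap_apply_right]; exact hjpq
      · rw [Equiv.swap_apply_of_ne_of_ne hrp hrq]
    · rw [pext_apply_not _ _ hy]
  have key : ∀ τ : Equiv.Perm (Fin (k+1)),
      φ (pext e (τ * Equiv.swap p q)) (T b j) = φ (pext e τ) (T b j) := by
    intro τ
    rw [phiT b φ hφ, phiT b φ hφ]
    congr 1
    funext i
    have h1 : (pext e (τ * Equiv.swap p q))⁻¹ = pext e (Equiv.swap p q) * pext e τ⁻¹ := by
      rw [pext_inv, mul_inv_rev, Equiv.swap_inv, pext_mul]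
    rw [h1, Equiv.Perm.mul_apply, hswap, ← pext_inv]
  refine Finset.sum_bij' (fun τ _ => τ * Equiv.swap p q) (fun τ _ => τ * Equiv.swap p q)
    ?_ ?_ ?_ ?_ ?_
  · intro τ hτ
    simp only [Finset.mem_filter, Finset.mem_univ, true_and] at hτ ⊢
    rw [Equiv.Perm.sign_mul, hτ, Equiv.Perm.sign_swap hpq]
    simp
  · intro τ hτ
    simp only [Finset.mem_filter, Finset.mem_univ, true_and] at hτ ⊢
    have hτ' : Equiv.Perm.sign τ = -1 := by
      rcases Int.units_eq_one_or (Equiv.Perm.sign τ) with h | h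
      · exact absurd h hτ
      · exact h
    rw [Equiv.Perm.sign_mul, hτ', Equiv.Perm.sign_swap hpq]
    simp
  · intro τ _
    show τ * Equiv.swap p q * Equiv.swap p q = τ
    rw [mul_assoc, Equiv.swap_mul_self, mul_one]
  · intro τ _
    show τ * Equiv.swap p q * Equiv.swap p q = τ
    rw [mul_assoc, Equiv.swap_mul_self, mul_one]
  · intro τ _; exact (key τ).symm

end Main


section Algebra

variable (F : Type*) [Field F] {n k : ℕ}

/-- The (unnormalized) symmetrizer over the image of `e`, in the group algebra. -/
noncomputable def PA (e : Fin (k+1) ↪ Fin n) : MonoidAlgebra F (Equiv.Perm (Fin n)) :=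
  ∑ τ : Equiv.Perm (Fin (k+1)), MonoidAlgebra.single (pext e τ) 1

variable (n k) in
/-- Generators of the two-sided ideal. -/
def Jgens : Set (MonoidAlgebra F (Equiv.Perm (Fin n))) :=
  {x | ∃ (e : Fin (k+1) ↪ Fin n) (g : Equiv.Perm (Fin n)),
    x = PA F e * MonoidAlgebra.single g 1}

variable (n k) in
/-- The two-sided ideal generated by the symmetrizers. -/
noncomputable def Jid : Ideal (MonoidAlgebra F (Equiv.Perm (Fin n))) :=
  Ideal.span (Jgens F n k)

lemma J_mul_single {x : MonoidAlgebra F (Equiv.Perm (Fin n))} (hx : x ∈ Jid F n k)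
    (g : Equiv.Perm (Fin n)) : x * MonoidAlgebra.single g 1 ∈ Jid F n k := by
  induction hx using Submodule.span_induction with
  | mem y hy =>
    obtain ⟨e, h, rfl⟩ := hy
    rw [mul_assoc, MonoidAlgebra.single_mul_single, one_mul]
    exact Ideal.subset_span ⟨e, h * g, rfl⟩
  | zero => rw [zero_mul]; exact zero_mem _
  | add y z _ _ hy hz => rw [add_mul]; exact add_mem hy hz
  | smul a y _ hy =>
    rw [smul_eq_mul, mul_assoc]
    exact Ideal.mul_mem_left _ _ hy

lemma J_mul_right {x : MonoidAlgebra F (Equiv.Perm (Fin n))} (hx : x ∈ Jid F n k)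
    (a : MonoidAlgebra F (Equiv.Perm (Fin n))) : x * a ∈ Jid F n k := by
  induction a using MonoidAlgebra.induction_on with
  | of g => exact J_mul_single F hx g
  | add f g hf hg => rw [mul_add]; exact add_mem hf hg
  | smul r f hf =>
    rw [mul_smul_comm, Algebra.smul_def]
    exact Ideal.mul_mem_left _ _ hf

variable (n) in
/-- The antipode `g ↦ g⁻¹`, as a linear map. -/
noncomputable def Sa : MonoidAlgebra F (Equiv.Perm (Fin n)) →ₗ[F] MonoidAlgebra F (Equiv.Perm (Fin n)) :=
  MonoidAlgebra.mapDomainLinearMap F F (fun g => g⁻¹)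

lemma Sa_single (g : Equiv.Perm (Fin n)) (c : F) :
    Sa F n (MonoidAlgebra.single g c) = MonoidAlgebra.single g⁻¹ c :=
  MonoidAlgebra.mapDomainLinearMap_single _ _ _

lemma Sa_mul (x y : MonoidAlgebra F (Equiv.Perm (Fin n))) :
    Sa F n (x * y) = Sa F n y * Sa F n x := by
  induction x using MonoidAlgebra.induction_on with
  | of g =>
    induction y using MonoidAlgebra.induction_on with
    | of h =>
      rw [MonoidAlgebra.of_apply, MonoidAlgebra.of_apply, MonoidAlgebra.single_mul_single,
        Sa_single, Sa_single, Sa_single, MonoidAlgebra.single_mul_single, mul_inv_rev, mul_one]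
    | add f' g' hf' hg' => rw [mul_add, map_add, map_add, add_mul, hf', hg']
    | smul r f hf => rw [mul_smul_comm, map_smul, map_smul, hf, smul_mul_assoc]
  | add f g hf hg => rw [add_mul, map_add, map_add, mul_add, hf, hg]
  | smul r f hf => rw [smul_mul_assoc, map_smul, map_smul, hf, mul_smul_comm]

lemma Sa_Sa (x : MonoidAlgebra F (Equiv.Perm (Fin n))) : Sa F n (Sa F n x) = x := by
  induction x using MonoidAlgebra.induction_on with
  | of g => rw [MonoidAlgebra.of_apply, Sa_single, Sa_single, inv_inv]
  | add f g hf hg => rw [map_add, map_add, hf, hg]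
  | smul r f hf => rw [map_smul, map_smul, hf]

lemma Sa_PA (e : Fin (k+1) ↪ Fin n) : Sa F n (PA F e) = PA F e := by
  rw [PA, map_sum]
  simp only [Sa_single]
  exact Fintype.sum_equiv (Equiv.inv (Equiv.Perm (Fin (k+1))))
    (fun τ => MonoidAlgebra.single (pext e τ)⁻¹ 1)
    (fun τ => MonoidAlgebra.single (pext e τ) 1)
    (fun τ => by simp [pext_inv])

lemma Sa_J {x : MonoidAlgebra F (Equiv.Perm (Fin n))} (hx : x ∈ Jid F n k) :
    Sa F n x ∈ Jid F n k := by
  induction hx using Submodule.span_induction with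
  | mem y hy =>
    obtain ⟨e, g, rfl⟩ := hy
    rw [Sa_mul, Sa_single, Sa_PA]
    have h0 : PA F e * MonoidAlgebra.single 1 1 ∈ Jid F n k :=
      Ideal.subset_span ⟨e, 1, rfl⟩
    have hPA : PA F e ∈ Jid F n k := by
      rwa [← MonoidAlgebra.one_def, mul_one] at h0
    exact Ideal.mul_mem_left _ _ hPA
  | zero => rw [map_zero]; exact zero_mem _
  | add y z _ _ hy hz => rw [map_add]; exact add_mem hy hz
  | smul a y _ hy =>
    rw [smul_eq_mul, Sa_mul]
    exact J_mul_right F hy _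

end Algebra

section Rep

variable {F : Type*} [Field F] [CharZero F]
  {V : Type*} [AddCommGroup V] [Module F V]
  {n k : ℕ}
  (b : Module.Basis (Fin k) F V)
  (φ : Representation F (Equiv.Perm (Fin n)) (⨂[F] _ : Fin n, V))

/-- Span of even operators. -/
noncomputable def Wev : Submodule F (Module.End F (⨂[F] _ : Fin n, V)) :=
  Submodule.span F (⇑φ '' {σ : Equiv.Perm (Fin n) | Equiv.Perm.sign σ = 1})

/-- Span of odd operators. -/
noncomputable def Nod : Submodule F (Module.End F (⨂[F] _ : Fin n, V)) :=
  Submodule.span F (⇑φ '' {σ : Equiv.Perm (Fin n) | Equiv.Perm.sign σ = -1})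

lemma compPar (g : Equiv.Perm (Fin n)) (P Q : Set (Equiv.Perm (Fin n)))
    (h : ∀ σ ∈ P, g * σ ∈ Q) {t : Module.End F (⨂[F] _ : Fin n, V)}
    (ht : t ∈ Submodule.span F (⇑φ '' P)) :
    (φ g) * t ∈ Submodule.span F (⇑φ '' Q) := by
  induction ht using Submodule.span_induction with
  | mem x hx =>
    obtain ⟨σ, hσ, rfl⟩ := hx
    rw [show (φ g) * (φ σ) = φ (g * σ) from (map_mul φ g σ).symm]
    exact Submodule.subset_span ⟨g * σ, h σ hσ, rfl⟩
  | zero => rw [mul_zero]; exact zero_mem _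
  | add x y _ _ hx hy => rw [mul_add]; exact add_mem hx hy
  | smul c x _ hx => rw [mul_smul_comm]; exact Submodule.smul_mem _ _ hx

lemma phig_WN (g : Equiv.Perm (Fin n)) {t : Module.End F (⨂[F] _ : Fin n, V)}
    (ht : t ∈ Wev φ ⊓ Nod φ) : (φ g) * t ∈ Wev φ ⊓ Nod φ := by
  rcases Int.units_eq_one_or (Equiv.Perm.sign g) with hg | hg
  · refine ⟨compPar φ g {σ | Equiv.Perm.sign σ = 1} {σ | Equiv.Perm.sign σ = 1} ?_ ht.1,
      compPar φ g {σ | Equiv.Perm.sign σ = -1} {σ | Equiv.Perm.sign σ = -1} ?_ ht.2⟩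
    · intro σ hσ
      simp only [Set.mem_setOf_eq] at hσ ⊢
      simp [Equiv.Perm.sign_mul, hσ, hg]
    · intro σ hσ
      simp only [Set.mem_setOf_eq] at hσ ⊢
      simp [Equiv.Perm.sign_mul, hσ, hg]
  · refine ⟨compPar φ g {σ | Equiv.Perm.sign σ = -1} {σ | Equiv.Perm.sign σ = 1} ?_ ht.2,
      compPar φ g {σ | Equiv.Perm.sign σ = 1} {σ | Equiv.Perm.sign σ = -1} ?_ ht.1⟩
    · intro σ hσ
      simp only [Set.mem_setOf_eq] at hσ ⊢
      simp [Equiv.Perm.sign_mul, hσ, hg]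
    · intro σ hσ
      simp only [Set.mem_setOf_eq] at hσ ⊢
      simp [Equiv.Perm.sign_mul, hσ, hg]

lemma PhiA_WN (a : MonoidAlgebra F (Equiv.Perm (Fin n)))
    {t : Module.End F (⨂[F] _ : Fin n, V)} (ht : t ∈ Wev φ ⊓ Nod φ) :
    φ.asAlgebraHom a * t ∈ Wev φ ⊓ Nod φ := by
  induction a using MonoidAlgebra.induction_on with
  | of g =>
    rw [MonoidAlgebra.of_apply, Representation.asAlgebraHom_single_one]
    exact phig_WN φ g ht
  | add f g hf hg => rw [map_add, add_mul]; exact add_mem hf hg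
  | smul r f hf => rw [map_smul, smul_mul_assoc]; exact Submodule.smul_mem _ _ hf

lemma Phi_PA (e : Fin (k+1) ↪ Fin n) :
    φ.asAlgebraHom (PA F e) = ∑ τ : Equiv.Perm (Fin (k+1)), φ (pext e τ) := by
  rw [PA, map_sum]
  exact Finset.sum_congr rfl fun τ _ => Representation.asAlgebraHom_single_one φ _

variable (hφ : ∀ (σ : Equiv.Perm (Fin n)) (v : Fin n → V),
      φ σ (PiTensorProduct.tprod F v) = PiTensorProduct.tprod F (fun i => v (σ⁻¹ i)))

include b hφ in
lemma genWN (e : Fin (k+1) ↪ Fin n) (g : Equiv.Perm (Fin n)) :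
    φ.asAlgebraHom (PA F e * MonoidAlgebra.single g 1) ∈ Wev φ ⊓ Nod φ := by
  have h1 : φ.asAlgebraHom (PA F e * MonoidAlgebra.single g 1)
      = (∑ τ ∈ Finset.univ.filter (fun τ : Equiv.Perm (Fin (k+1)) => Equiv.Perm.sign τ = 1),
            φ (pext e τ)) * φ g
        + (∑ τ ∈ Finset.univ.filter (fun τ : Equiv.Perm (Fin (k+1)) => ¬ Equiv.Perm.sign τ = 1),
            φ (pext e τ)) * φ g := by
    rw [map_mul, Representation.asAlgebraHom_single_one, ← add_mul,
      Finset.sum_filter_add_sum_filter_not Finset.univ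
        (fun τ : Equiv.Perm (Fin (k+1)) => Equiv.Perm.sign τ = 1) (fun τ => φ (pext e τ)),
      Phi_PA]
  have hEO : (∑ τ ∈ Finset.univ.filter
        (fun τ : Equiv.Perm (Fin (k+1)) => Equiv.Perm.sign τ = 1), φ (pext e τ)) * φ g
      = (∑ τ ∈ Finset.univ.filter
          (fun τ : Equiv.Perm (Fin (k+1)) => ¬ Equiv.Perm.sign τ = 1), φ (pext e τ)) * φ g := by
    rw [EO b φ hφ e]
  rcases Int.units_eq_one_or (Equiv.Perm.sign g) with hg | hg
  · have hX : (∑ τ ∈ Finset.univ.filter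
          (fun τ : Equiv.Perm (Fin (k+1)) => Equiv.Perm.sign τ = 1), φ (pext e τ)) * φ g
        ∈ Wev φ := by
      rw [Finset.sum_mul]
      refine Submodule.sum_mem _ fun τ hτ => ?_
      rw [← map_mul]
      refine Submodule.subset_span ⟨pext e τ * g, ?_, rfl⟩
      have hτ2 := (Finset.mem_filter.mp hτ).2
      simp only [Set.mem_setOf_eq]
      rw [Equiv.Perm.sign_mul, sign_pext, hτ2, hg, mul_one]
    have hY : (∑ τ ∈ Finset.univ.filter
          (fun τ : Equiv.Perm (Fin (k+1)) => ¬ Equiv.Perm.sign τ = 1), φ (pext e τ)) * φ g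
        ∈ Nod φ := by
      rw [Finset.sum_mul]
      refine Submodule.sum_mem _ fun τ hτ => ?_
      rw [← map_mul]
      refine Submodule.subset_span ⟨pext e τ * g, ?_, rfl⟩
      have hτ2 := (Finset.mem_filter.mp hτ).2
      have hτ3 : Equiv.Perm.sign τ = -1 := by
        rcases Int.units_eq_one_or (Equiv.Perm.sign τ) with h | h
        · exact absurd h hτ2
        · exact h
      simp only [Set.mem_setOf_eq]
      rw [Equiv.Perm.sign_mul, sign_pext, hτ3, hg, mul_one]
    constructor
    · rw [h1, ← hEO]; exact add_mem hX hX
    · rw [h1, hEO]; exact add_mem hY hY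
  · have hX : (∑ τ ∈ Finset.univ.filter
          (fun τ : Equiv.Perm (Fin (k+1)) => Equiv.Perm.sign τ = 1), φ (pext e τ)) * φ g
        ∈ Nod φ := by
      rw [Finset.sum_mul]
      refine Submodule.sum_mem _ fun τ hτ => ?_
      rw [← map_mul]
      refine Submodule.subset_span ⟨pext e τ * g, ?_, rfl⟩
      have hτ2 := (Finset.mem_filter.mp hτ).2
      simp only [Set.mem_setOf_eq]
      rw [Equiv.Perm.sign_mul, sign_pext, hτ2, hg, one_mul]
    have hY : (∑ τ ∈ Finset.univ.filter
          (fun τ : Equiv.Perm (Fin (k+1)) => ¬ Equiv.Perm.sign τ = 1), φ (pext e τ)) * φ g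
        ∈ Wev φ := by
      rw [Finset.sum_mul]
      refine Submodule.sum_mem _ fun τ hτ => ?_
      rw [← map_mul]
      refine Submodule.subset_span ⟨pext e τ * g, ?_, rfl⟩
      have hτ2 := (Finset.mem_filter.mp hτ).2
      have hτ3 : Equiv.Perm.sign τ = -1 := by
        rcases Int.units_eq_one_or (Equiv.Perm.sign τ) with h | h
        · exact absurd h hτ2
        · exact h
      simp only [Set.mem_setOf_eq]
      rw [Equiv.Perm.sign_mul, sign_pext, hτ3, hg]; simp
    constructor
    · rw [h1, hEO]; exact add_mem hY hY
    · rw [h1, ← hEO]; exact add_mem hX hX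

include b hφ in
lemma PhiJ {x : MonoidAlgebra F (Equiv.Perm (Fin n))} (hx : x ∈ Jid F n k) :
    φ.asAlgebraHom x ∈ Wev φ ⊓ Nod φ := by
  induction hx using Submodule.span_induction with
  | mem y hy =>
    obtain ⟨e, g, rfl⟩ := hy
    exact genWN b φ hφ e g
  | zero => rw [map_zero]; exact zero_mem _
  | add y z _ _ hy hz => rw [map_add]; exact add_mem hy hz
  | smul a y _ hy => rw [smul_eq_mul, map_mul]; exact PhiA_WN φ a hy

include hφ in
lemma unitJ (hkn : k * k < n) (j : Fin n → Fin k) :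
    ∃ x ∈ Jid F n k, φ.asAlgebraHom x (T b j) = T b j := by
  classical
  have hcard : (Finset.univ : Finset (Fin k)).card * k
      < (Finset.univ : Finset (Fin n)).card := by simpa using hkn
  obtain ⟨v, -, hv⟩ := Finset.exists_lt_card_fiber_of_mul_lt_card_of_maps_to
    (f := j) (fun a _ => Finset.mem_univ _) hcard
  obtain ⟨s', hs'sub, hs'card⟩ := Finset.exists_subset_card_eq hv
  let eqv := s'.equivFinOfCardEq hs'card
  let e : Fin (k+1) ↪ Fin n := (Equiv.toEmbedding eqv.symm).trans (Function.Embedding.subtype _)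
  have he : ∀ p, j (e p) = v := by
    intro p
    have hmem : (eqv.symm p : Fin n) ∈ s' := (eqv.symm p).2
    have := hs'sub hmem
    exact (Finset.mem_filter.mp this).2
  have h0 : PA F e * MonoidAlgebra.single 1 1 ∈ Jid F n k := Ideal.subset_span ⟨e, 1, rfl⟩
  have hPA : PA F e ∈ Jid F n k := by rwa [← MonoidAlgebra.one_def, mul_one] at h0
  refine ⟨((Nat.factorial (k+1) : F))⁻¹ • PA F e, ?_, ?_⟩
  · rw [Algebra.smul_def]
    exact Ideal.mul_mem_left _ _ hPA
  · rw [map_smul, Phi_PA]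
    rw [LinearMap.smul_apply, LinearMap.coe_sum, Finset.sum_apply]
    have hterm : ∀ τ : Equiv.Perm (Fin (k+1)), φ (pext e τ) (T b j) = T b j := by
      intro τ
      rw [phiT b φ hφ]
      congr 1
      funext i
      by_cases hi : i ∈ Set.range ⇑e
      · obtain ⟨p, rfl⟩ := hi
        rw [pext_inv, pext_apply_mem, he, he]
      · rw [pext_inv, pext_apply_not _ _ hi]
    rw [Finset.sum_congr rfl fun τ _ => hterm τ, Finset.sum_const, Finset.card_univ,
      Fintype.card_perm, Fintype.card_fin]
    rw [← Nat.cast_smul_eq_nsmul F, smul_smul, inv_mul_cancel₀, one_smul]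
    exact Nat.cast_ne_zero.mpr (Nat.factorial_ne_zero _)

end Rep

end Stmt0Aux

/-- Let `F` be a field of characteristic `0`, `V` an `F`-vector space of
dimension `k`, and `n` a positive integer with `k² < n`.  Let `φ` be the (sign-free)
permutation action of the symmetric group `Sₙ` on the `n`-fold tensor power `V^{⊗n}`,
`φ_σ(v₁ ⊗ ⋯ ⊗ vₙ) = v_{σ⁻¹(1)} ⊗ ⋯ ⊗ v_{σ⁻¹(n)}`.  Then the image of the group algebra
`F[Aₙ]` of the alternating group (i.e. the `F`-linear span of `{φ_σ : σ ∈ Aₙ}`) equals the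
image of the full group algebra `F[Sₙ]` (the span of `{φ_σ : σ ∈ Sₙ}`) inside
`End_F(V^{⊗n})`. -/
theorem stmt0 (F : Type*) [Field F] [CharZero F]
    (V : Type*) [AddCommGroup V] [Module F V] [FiniteDimensional F V]
    (k n : ℕ) (hk : Module.finrank F V = k) (hn : 0 < n) (hkn : k ^ 2 < n)
    (φ : Representation F (Equiv.Perm (Fin n)) (⨂[F] _ : Fin n, V))
    (hφ : ∀ (σ : Equiv.Perm (Fin n)) (v : Fin n → V),
      φ σ (PiTensorProduct.tprod F v) = PiTensorProduct.tprod F (fun i => v (σ⁻¹ i))) :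
    Submodule.span F (⇑φ '' ((alternatingGroup (Fin n) : Subgroup (Equiv.Perm (Fin n))) : Set (Equiv.Perm (Fin n)))) =
      Submodule.span F (Set.range ⇑φ) := by
  classical
  open Stmt0Aux in
  letI b : Module.Basis (Fin k) F V := (Module.finBasis F V).reindex (finCongr hk)
  haveI : NeZero ((Fintype.card (ULift (Equiv.Perm (Fin n))) : F)) :=
    ⟨by simp [Fintype.card_ulift, Nat.factorial_ne_zero]⟩
  haveI : IsSemisimpleRing (MonoidAlgebra F (Equiv.Perm (Fin n))) :=
    ((MonoidAlgebra.domCongr F F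
      (MulEquiv.ulift : ULift.{0} (Equiv.Perm (Fin n)) ≃* Equiv.Perm (Fin n))).toRingEquiv).isSemisimpleRing
  obtain ⟨E0, hidem, hspan⟩ := IsSemisimpleRing.ideal_eq_span_idempotent (Stmt0Aux.Jid F n k)
  have hE0J : E0 ∈ Stmt0Aux.Jid F n k := hspan ▸ Ideal.subset_span rfl
  have hrunit : ∀ x ∈ Stmt0Aux.Jid F n k, x * E0 = x := by
    intro x hx
    rw [hspan] at hx
    obtain ⟨a, rfl⟩ := Submodule.mem_span_singleton.mp hx
    rw [smul_eq_mul, mul_assoc, hidem.eq]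
  have huJ : Stmt0Aux.Sa F n E0 ∈ Stmt0Aux.Jid F n k := Stmt0Aux.Sa_J F hE0J
  have hlu : ∀ x ∈ Stmt0Aux.Jid F n k, Stmt0Aux.Sa F n E0 * x = x := by
    intro x hx
    calc Stmt0Aux.Sa F n E0 * x
        = Stmt0Aux.Sa F n E0 * Stmt0Aux.Sa F n (Stmt0Aux.Sa F n x) := by
          rw [Stmt0Aux.Sa_Sa]
      _ = Stmt0Aux.Sa F n (Stmt0Aux.Sa F n x * E0) := (Stmt0Aux.Sa_mul F _ _).symm
      _ = Stmt0Aux.Sa F n (Stmt0Aux.Sa F n x) := by rw [hrunit _ (Stmt0Aux.Sa_J F hx)]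
      _ = x := Stmt0Aux.Sa_Sa F x
  have hPhiu : φ.asAlgebraHom (Stmt0Aux.Sa F n E0) = 1 := by
    apply LinearMap.ext_on_range (Stmt0Aux.spanT (n := n) b)
    intro j
    obtain ⟨x, hxJ, hx⟩ := Stmt0Aux.unitJ b φ hφ (by rwa [pow_two] at hkn) j
    calc φ.asAlgebraHom (Stmt0Aux.Sa F n E0) (Stmt0Aux.T b j)
        = φ.asAlgebraHom (Stmt0Aux.Sa F n E0) (φ.asAlgebraHom x (Stmt0Aux.T b j)) := by rw [hx]
      _ = φ.asAlgebraHom (Stmt0Aux.Sa F n E0 * x) (Stmt0Aux.T b j) := by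
          rw [map_mul]; rfl
      _ = φ.asAlgebraHom x (Stmt0Aux.T b j) := by rw [hlu x hxJ]
      _ = Stmt0Aux.T b j := hx
      _ = (1 : Module.End F (⨂[F] _ : Fin n, V)) (Stmt0Aux.T b j) := rfl
  apply le_antisymm
  · exact Submodule.span_mono (Set.image_subset_range _ _)
  · rw [Submodule.span_le]
    rintro _ ⟨σ, rfl⟩
    have hmem : MonoidAlgebra.single σ (1 : F) * Stmt0Aux.Sa F n E0 ∈ Stmt0Aux.Jid F n k :=
      Ideal.mul_mem_left _ _ huJ
    have h2 : φ σ = φ.asAlgebraHom (MonoidAlgebra.single σ 1 * Stmt0Aux.Sa F n E0) := by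
      rw [map_mul, Representation.asAlgebraHom_single_one, hPhiu, mul_one]
    have h3 := (Stmt0Aux.PhiJ b φ hφ hmem).1
    rw [Stmt0Aux.Wev] at h3
    have hsets : (⇑φ '' {σ : Equiv.Perm (Fin n) | Equiv.Perm.sign σ = 1})
        = ⇑φ '' ((alternatingGroup (Fin n) : Subgroup (Equiv.Perm (Fin n))) :
            Set (Equiv.Perm (Fin n))) := by
      congr 1
    rw [hsets] at h3
    rw [SetLike.mem_coe, h2]
    exact h3
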